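/- There is an absolute constant C such that the following holds for all integers N ≥ 2, W ≥ 1, all residues a, all integers h with 0 ≤ h ≤ N, and all reals T ≥ 1: the number of integers n with N ≤ n < 2N, n ≡ a (mod W), and such that n + h has a squarefull divisor s with s > T and gcd(s, W) = 1, is at most C (N/(W √T) + √N). -/

import Mathlib

private lemma sq_decomp (s : ℕ) (hs : 0 < s) (h : ∀ p : ℕ, p.Prime → p ∣ s → p ^ 2 ∣ s) :
    ∃ b e : ℕ, 0 < b ∧ 0 < e ∧ s = b ^ 3 * e ^ 2 := by
  induction s using Nat.strong_induction_on with
  | _ s ih =>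
  rcases eq_or_lt_of_le (show 1 ≤ s from hs) with h1 | h1
  · exact ⟨1, 1, one_pos, one_pos, by omega⟩
  · have hs0 : s ≠ 0 := by omega
    have hp : s.minFac.Prime := Nat.minFac_prime (by omega)
    set p := s.minFac with hpdef
    have hpd : p ∣ s := Nat.minFac_dvd s
    have hk2 : 2 ≤ s.factorization p := by
      rw [← Nat.Prime.pow_dvd_iff_le_factorization hp hs0]
      exact h p hp hpd
    have hts : p ^ (s.factorization p) * (s / p ^ (s.factorization p)) = s :=
      Nat.ordProj_mul_ordCompl_eq_self s p
    set k := s.factorization p with hkdef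
    set t := s / p ^ k with htdef
    have hpt : ¬ p ∣ t := Nat.not_dvd_ordCompl hp hs0
    have ht0 : 0 < t := by
      rcases Nat.eq_zero_or_pos t with h0 | h0
      · rw [h0, mul_zero] at hts; omega
      · exact h0
    have hp2 : 2 ≤ p := hp.two_le
    have hplt : 2 ≤ p ^ k := by
      calc 2 ≤ p := hp2
      _ = p ^ 1 := (pow_one p).symm
      _ ≤ p ^ k := Nat.pow_le_pow_right (by omega) (by omega)
    have htlt : t < s := by nlinarith
    have htsq : ∀ q : ℕ, q.Prime → q ∣ t → q ^ 2 ∣ t := by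
      intro q hq hqt
      have hqs : q ∣ s := hqt.trans (Nat.div_dvd_of_dvd (Nat.ordProj_dvd s p))
      have hq2 : q ^ 2 ∣ s := h q hq hqs
      have hqp : q ≠ p := by rintro rfl; exact hpt hqt
      have hcop : Nat.Coprime (q ^ 2) (p ^ k) :=
        Nat.Coprime.pow _ _ ((Nat.coprime_primes hq hp).mpr hqp)
      refine hcop.dvd_of_dvd_mul_left ?_
      rw [hts]; exact hq2
    obtain ⟨b, e, hb, he, hbe⟩ := ih t htlt ht0 htsq
    rcases Nat.even_or_odd k with ⟨m, hm⟩ | ⟨m, hm⟩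
    · refine ⟨b, e * p ^ m, hb, by positivity, ?_⟩
      rw [← hts, hbe, hm]; ring
    · have hm1 : 1 ≤ m := by omega
      refine ⟨b * p, e * p ^ (m - 1), by positivity, by positivity, ?_⟩
      rw [← hts, hbe]
      have hkk : k = 3 + 2 * (m - 1) := by omega
      rw [hkk]; ring

private lemma card_ap_le (N M : ℕ) (hM : 0 < M) (F : Finset ℕ)
    (hF : ∀ n ∈ F, N ≤ n ∧ n < 2 * N)
    (hmod : ∀ m ∈ F, ∀ n ∈ F, m ≤ n → M ∣ n - m) :
    F.card ≤ N / M + 1 := by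
  classical
  have key : ∀ m ∈ F, ∀ n ∈ F, m ≤ n → (m - N) / M = (n - N) / M → m = n := by
    intro m hm n hn hle hq
    obtain ⟨d, hd⟩ := hmod m hm n hn hle
    have h1 := hF m hm
    have h2 := hF n hn
    have e1 := Nat.div_add_mod (m - N) M
    have e2 := Nat.div_add_mod (n - N) M
    have l1 : (m - N) % M < M := Nat.mod_lt _ hM
    have l2 : (n - N) % M < M := Nat.mod_lt _ hM
    rw [hq] at e1
    have hdd : M * d = 0 ∨ M ≤ M * d := by
      rcases Nat.eq_zero_or_pos d with h0 | h0
      · exact Or.inl (by rw [h0, mul_zero])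
      · exact Or.inr (Nat.le_mul_of_pos_right M h0)
    generalize hX : M * ((n - N) / M) = X at e1 e2
    generalize hY : M * d = Y at hd hdd
    omega

  have hinj : Set.InjOn (fun n => (n - N) / M) F := by
    intro m hm n hn hq
    rcases le_total m n with hle | hle
    · exact key m hm n hn hle hq
    · exact (key n hn m hm hle hq.symm).symm
  have himg : F.image (fun n => (n - N) / M) ⊆ Finset.range (N / M + 1) := by
    intro x hx
    simp only [Finset.mem_image] at hx
    obtain ⟨n, hn, rfl⟩ := hx
    have h2 := hF n hn
    have : (n - N) / M ≤ N / M := Nat.div_le_div_right (by omega)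
    simp only [Finset.mem_range]; omega
  calc F.card = (F.image (fun n => (n - N) / M)).card := (Finset.card_image_of_injOn hinj).symm
  _ ≤ (Finset.range (N / M + 1)).card := Finset.card_le_card himg
  _ = N / M + 1 := Finset.card_range _

private lemma sum_inv_sq (e₀ : ℕ) (he : 1 ≤ e₀) (K : ℕ) :
    ∑ e ∈ Finset.Icc e₀ K, (1 : ℝ) / (e : ℝ) ^ 2 ≤ 2 / e₀ := by
  have he' : (1:ℝ) ≤ (e₀:ℝ) := by exact_mod_cast he
  have key : ∀ K : ℕ, ∑ e ∈ Finset.Icc e₀ K, (1 : ℝ) / (e : ℝ) ^ 2 ≤ 2 / e₀ - 1 / (max e₀ K : ℕ) := by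
    intro K
    induction K with
    | zero =>
      rw [Finset.Icc_eq_empty (by omega)]
      rw [Nat.max_eq_left (Nat.zero_le _)]
      simp only [Finset.sum_empty]
      have h1 : (0:ℝ) < (e₀:ℝ) := by linarith
      have h2 : 2 / (e₀:ℝ) - 1 / e₀ = 1 / e₀ := by ring
      rw [h2]; positivity
    | succ K ihK =>
      rcases lt_or_ge (K+1) e₀ with hlt | hle
      · rw [Finset.Icc_eq_empty (by omega), Nat.max_eq_left (by omega)]
        simp only [Finset.sum_empty]
        have h1 : (0:ℝ) < (e₀:ℝ) := by linarith
        have : 2 / (e₀:ℝ) - 1 / e₀ = 1 / e₀ := by ring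
        rw [this]; positivity
      · rw [Finset.sum_Icc_succ_top hle, Nat.max_eq_right (by omega)]
        rcases eq_or_lt_of_le hle with heq | hlt
        · rw [← heq, Finset.Icc_eq_empty (by omega)]
          simp only [Finset.sum_empty, zero_add]
          have : 2 / (e₀:ℝ) - 1 / e₀ = 1 / e₀ := by ring
          rw [this]
          rw [div_le_div_iff₀ (by positivity) (by positivity)]
          nlinarith
        · have hK : e₀ ≤ K := by omega
          rw [Nat.max_eq_right hK] at ihK
          have hK1 : (1:ℝ) ≤ (K:ℝ) := by exact_mod_cast le_trans he hK
          have step : (1:ℝ) / (K+1:ℕ) ^ 2 ≤ 1 / K - 1 / (K+1:ℕ) := by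
            push_cast
            rw [div_sub_div _ _ (by positivity) (by positivity), div_le_div_iff₀ (by positivity) (by positivity)]
            ring_nf
            nlinarith
          linarith
  refine (key K).trans ?_
  have h2 : (0:ℝ) < (max e₀ K : ℕ) := by
    have : 1 ≤ max e₀ K := le_trans he (le_max_left _ _)
    exact_mod_cast this
  have : (0:ℝ) ≤ 1 / (max e₀ K : ℕ) := by positivity
  linarith

private lemma sum_inv_pow32 (K : ℕ) :
    ∑ b ∈ Finset.Icc 1 K, 1 / Real.sqrt ((b : ℝ) ^ 3) ≤ 3 := by
  have key : ∀ K : ℕ, 1 ≤ K → ∑ b ∈ Finset.Icc 1 K, 1 / Real.sqrt ((b : ℝ) ^ 3) ≤ 3 - 2 / Real.sqrt K := by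
    intro K hK
    induction K with
    | zero => omega
    | succ K ihK =>
      rcases Nat.eq_zero_or_pos K with h0 | h0
      · subst h0
        norm_num [Finset.Icc_self, Real.sqrt_one]
      · rw [Finset.sum_Icc_succ_top (by omega)]
        have hK1 : (1:ℝ) ≤ (K:ℝ) := by exact_mod_cast h0
        set u := Real.sqrt K with hu
        set v := Real.sqrt (K+1 : ℕ) with hv
        have hu2 : u ^ 2 = K := Real.sq_sqrt (by positivity)
        have hv2 : v ^ 2 = ((K:ℝ) + 1) := by
          rw [hv]; push_cast; exact Real.sq_sqrt (by positivity)
        have hu1 : 1 ≤ u := by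
          rw [hu, show (1:ℝ) = Real.sqrt 1 by rw [Real.sqrt_one]]
          exact Real.sqrt_le_sqrt hK1
        have huv : u ≤ v := by
          rw [hu, hv]; exact Real.sqrt_le_sqrt (by push_cast; linarith)
        have hv1 : 1 ≤ v := le_trans hu1 huv
        have hvcube : Real.sqrt (((K+1:ℕ) : ℝ) ^ 3) = v ^ 3 := by
          rw [show ((K+1:ℕ):ℝ)^3 = (v^2)^3 by rw [hv2]; push_cast; ring]
          rw [show ((v^2)^3 : ℝ) = (v^3)^2 by ring]
          exact Real.sqrt_sq (by positivity)
        have step : 1 / Real.sqrt (((K+1:ℕ):ℝ) ^ 3) ≤ 2 / u - 2 / v := by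
          rw [hvcube]
          rw [div_sub_div _ _ (by positivity) (by positivity), div_le_div_iff₀ (by positivity) (by positivity)]
          have hdiff : (v - u) * (v + u) = 1 := by nlinarith
          have hpos : (0:ℝ) < u + v := by positivity
          have key2 : (2 * v - u * 2) * v ^ 3 * (u + v) = 2 * v ^ 3 := by
            linear_combination 2 * v ^ 3 * hdiff
          have key3 : 1 * (u * v) * (u + v) ≤ 2 * v ^ 3 := by
            nlinarith [huv, hu1, hv1, sq_nonneg (u - v), sq_nonneg (u + v)]
          have := (mul_le_mul_iff_left₀ hpos).mp (key3.trans_eq key2.symm)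
          linarith
        have := ihK h0
        push_cast at this step ⊢
        linarith
  rcases Nat.eq_zero_or_pos K with h0 | h0
  · subst h0; simp
  · refine (key K h0).trans ?_
    have : 0 < Real.sqrt K := Real.sqrt_pos.mpr (by exact_mod_cast h0)
    have : 0 ≤ 2 / Real.sqrt K := by positivity
    linarith

private lemma card_le_real (F : Finset ℕ) (y : ℝ) (hy : 0 ≤ y)
    (h : ∀ e ∈ F, 1 ≤ e ∧ (e : ℝ) ≤ y) : (F.card : ℝ) ≤ y := by
  have hsub : F ⊆ Finset.Icc 1 ⌊y⌋₊ := fun e he =>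
    Finset.mem_Icc.mpr ⟨(h e he).1, Nat.le_floor (h e he).2⟩
  calc (F.card : ℝ) ≤ ((Finset.Icc 1 ⌊y⌋₊).card : ℝ) := by
        exact_mod_cast Finset.card_le_card hsub
  _ ≤ (⌊y⌋₊ : ℝ) := by rw [Nat.card_Icc]; push_cast; simp
  _ ≤ y := Nat.floor_le hy

/-- There is an absolute constant `C` such that for all `N ≥ 2`, `W ≥ 1`, residues `a`,
shifts `0 ≤ h ≤ N`, and `T ≥ 1`: the number of `n ∈ [N, 2N)` with `n ≡ a (mod W)` such
that `n + h` has a squarefull divisor `s > T` coprime to `W` is at most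
`C (N / (W √T) + √N)`. -/
theorem squarefull_divisor_count :
    ∃ C : ℝ, ∀ N W : ℕ, 2 ≤ N → 1 ≤ W → ∀ a : ℕ, ∀ h : ℕ, h ≤ N → ∀ T : ℝ, 1 ≤ T →
      ((Set.ncard {n : ℕ | N ≤ n ∧ n < 2 * N ∧ n % W = a % W ∧
          ∃ s : ℕ, (∀ p : ℕ, p.Prime → p ∣ s → p ^ 2 ∣ s) ∧ s ∣ n + h ∧
            T < (s : ℝ) ∧ Nat.gcd s W = 1}) : ℝ) ≤
        C * ((N : ℝ) / ((W : ℝ) * Real.sqrt T) + Real.sqrt N) := by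
  refine ⟨6, ?_⟩
  intro N W hN hW a h hh T hT
  classical
  set K := 3 * N with hK
  set P : Finset (ℕ × ℕ) := (Finset.Icc 1 K ×ˢ Finset.Icc 1 K).filter
    (fun q => T < ((q.1 : ℝ) ^ 3 * (q.2 : ℝ) ^ 2) ∧ ((q.1 : ℝ) ^ 3 * (q.2 : ℝ) ^ 2) ≤ (K : ℝ) ∧
      Nat.gcd (q.1 ^ 3 * q.2 ^ 2) W = 1) with hPdef
  set A : ℕ × ℕ → Finset ℕ := fun q => (Finset.Ico N (2 * N)).filter
    (fun n => n % W = a % W ∧ (q.1 ^ 3 * q.2 ^ 2) ∣ (n + h)) with hAdef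
  have hsqT : 1 ≤ Real.sqrt T := by
    rw [show (1:ℝ) = Real.sqrt 1 by rw [Real.sqrt_one]]
    exact Real.sqrt_le_sqrt hT
  -- Step I : inclusion
  have hsub : {n : ℕ | N ≤ n ∧ n < 2 * N ∧ n % W = a % W ∧
      ∃ s : ℕ, (∀ p : ℕ, p.Prime → p ∣ s → p ^ 2 ∣ s) ∧ s ∣ n + h ∧
        T < (s : ℝ) ∧ Nat.gcd s W = 1} ⊆ ↑(P.biUnion A) := by
    intro n hn
    obtain ⟨hn1, hn2, hn3, s, hsq, hdvd, hsT, hgcd⟩ := hn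
    have hs1 : (1:ℝ) < (s:ℝ) := lt_of_le_of_lt hT hsT
    have hs0 : 0 < s := by exact_mod_cast lt_trans zero_lt_one hs1
    obtain ⟨b, e, hb, he, hbe⟩ := sq_decomp s hs0 hsq
    have hnh : 0 < n + h := by omega
    have hsle : s ≤ n + h := Nat.le_of_dvd hnh hdvd
    have hsK : s ≤ K := by omega
    have hb3 : b ^ 3 ∣ s := Dvd.intro _ hbe.symm
    have he2 : e ^ 2 ∣ s := ⟨b ^ 3, by rw [hbe]; ring⟩
    have hbs : b ≤ s := Nat.le_of_dvd hs0 ((dvd_pow_self b (by norm_num)).trans hb3)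
    have hes : e ≤ s := Nat.le_of_dvd hs0 ((dvd_pow_self e (by norm_num)).trans he2)
    have hcast : ((b : ℝ) ^ 3 * (e : ℝ) ^ 2) = (s : ℝ) := by rw [hbe]; push_cast; ring
    simp only [Finset.coe_biUnion, Set.mem_iUnion, Finset.mem_coe]
    refine ⟨(b, e), ?_, ?_⟩
    · rw [hPdef]
      simp only [Finset.mem_filter, Finset.mem_product, Finset.mem_Icc]
      refine ⟨⟨⟨hb, le_trans hbs hsK⟩, ⟨he, le_trans hes hsK⟩⟩, ?_, ?_, ?_⟩
      · rw [hcast]; exact hsT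
      · rw [hcast]; exact_mod_cast hsK
      · rw [← hbe]; exact hgcd
    · rw [hAdef]
      simp only [Finset.mem_filter, Finset.mem_Ico]
      exact ⟨⟨hn1, hn2⟩, hn3, by rw [← hbe]; exact hdvd⟩
  have h1 : ((Set.ncard {n : ℕ | N ≤ n ∧ n < 2 * N ∧ n % W = a % W ∧
      ∃ s : ℕ, (∀ p : ℕ, p.Prime → p ∣ s → p ^ 2 ∣ s) ∧ s ∣ n + h ∧
        T < (s : ℝ) ∧ Nat.gcd s W = 1}) : ℝ) ≤ ((P.biUnion A).card : ℝ) := by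
    have := Set.ncard_le_ncard hsub (Finset.finite_toSet _)
    rw [Set.ncard_coe_finset] at this
    exact_mod_cast this
  -- Step II
  have hW0 : (0:ℝ) < (W:ℝ) := by exact_mod_cast hW
  have hN0 : (0:ℝ) ≤ (N:ℝ) := by positivity
  have hcard : ∀ q ∈ P, ((A q).card : ℝ) ≤
      (N : ℝ) / W * (1 / ((q.1 : ℝ) ^ 3 * (q.2 : ℝ) ^ 2)) + 1 := by
    intro q hq
    rw [hPdef] at hq
    simp only [Finset.mem_filter, Finset.mem_product, Finset.mem_Icc] at hq
    obtain ⟨⟨⟨hb1, _⟩, ⟨he1, _⟩⟩, _, _, hgcdq⟩ := hq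
    set s := q.1 ^ 3 * q.2 ^ 2 with hs
    have hs0 : 0 < s := by positivity
    have hM0 : 0 < s * W := Nat.mul_pos hs0 hW
    have key : (A q).card ≤ N / (s * W) + 1 := by
      refine card_ap_le N (s * W) hM0 (A q) ?_ ?_
      · intro n hn
        rw [hAdef] at hn
        simp only [Finset.mem_filter, Finset.mem_Ico] at hn
        exact hn.1
      · intro m hm n hn hle
        rw [hAdef] at hm hn
        simp only [Finset.mem_filter, Finset.mem_Ico] at hm hn
        obtain ⟨_, hm2, hm3⟩ := hm
        obtain ⟨_, hn2, hn3⟩ := hn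
        have hWd : W ∣ n - m := (Nat.modEq_iff_dvd' hle).mp (hm2.trans hn2.symm)
        have hsd : s ∣ n - m := by
          have := Nat.dvd_sub hn3 hm3
          rwa [show n + h - (m + h) = n - m by omega] at this
        exact Nat.Coprime.mul_dvd_of_dvd_of_dvd hgcdq hsd hWd
    have hcast1 : ((A q).card : ℝ) ≤ ((N / (s * W) : ℕ) : ℝ) + 1 := by exact_mod_cast key
    have hcast2 : ((N / (s * W) : ℕ) : ℝ) ≤ (N : ℝ) / ((s : ℕ) : ℝ) / W := by
      have h0 := Nat.cast_div_le (α := ℝ) (m := N) (n := s * W)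
      rw [div_div]
      push_cast at h0 ⊢
      exact h0
    have hs0R : (0:ℝ) < ((s:ℕ):ℝ) := by exact_mod_cast hs0
    have heq : (N : ℝ) / ((s : ℕ) : ℝ) / W = (N : ℝ) / W * (1 / ((q.1 : ℝ) ^ 3 * (q.2 : ℝ) ^ 2)) := by
      have : ((s : ℕ) : ℝ) = (q.1 : ℝ) ^ 3 * (q.2 : ℝ) ^ 2 := by rw [hs]; push_cast; ring
      rw [← this]
      field_simp
    linarith [hcast2.trans_eq heq]
  have h2 : ((P.biUnion A).card : ℝ) ≤ ∑ q ∈ P, ((A q).card : ℝ) := by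
    exact_mod_cast Finset.card_biUnion_le
  have h3 : ∑ q ∈ P, ((A q).card : ℝ) ≤
      (N : ℝ) / W * (∑ q ∈ P, 1 / ((q.1 : ℝ) ^ 3 * (q.2 : ℝ) ^ 2)) + P.card := by
    have hsum := Finset.sum_le_sum hcard
    rw [Finset.sum_add_distrib, Finset.sum_const, nsmul_eq_mul, mul_one, ← Finset.mul_sum] at hsum
    exact hsum
  -- Step III
  have hsT0 : (0:ℝ) < Real.sqrt T := lt_of_lt_of_le one_pos hsqT
  have hsum1 : ∑ q ∈ P, 1 / ((q.1 : ℝ) ^ 3 * (q.2 : ℝ) ^ 2) ≤ 6 / Real.sqrt T := by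
    have hsub2 : P ⊆ (Finset.Icc 1 K ×ˢ Finset.Icc 1 K).filter
        (fun q => T < ((q.1 : ℝ) ^ 3 * (q.2 : ℝ) ^ 2)) := by
      rw [hPdef]
      intro q hq
      simp only [Finset.mem_filter] at hq ⊢
      exact ⟨hq.1, hq.2.1⟩
    have inner_bound : ∀ b ∈ Finset.Icc 1 K,
        ∑ e ∈ (Finset.Icc 1 K).filter (fun e : ℕ => T < ((b : ℝ) ^ 3 * (e : ℝ) ^ 2)),
          1 / ((b : ℝ) ^ 3 * (e : ℝ) ^ 2) ≤ 2 / Real.sqrt T * (1 / Real.sqrt ((b : ℝ) ^ 3)) := by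
      intro b hb
      have hb1 : 1 ≤ b := (Finset.mem_Icc.mp hb).1
      have hb1R : (1:ℝ) ≤ (b:ℝ) := by exact_mod_cast hb1
      have hb3pos : (0:ℝ) < (b:ℝ) ^ 3 := by positivity
      have hsb : 0 < Real.sqrt ((b:ℝ) ^ 3) := Real.sqrt_pos.mpr hb3pos
      set x := Real.sqrt T / Real.sqrt ((b:ℝ) ^ 3) with hx
      have hx0 : 0 < x := div_pos hsT0 hsb
      set e₀ := ⌊x⌋₊ + 1 with he₀
      have hsub3 : (Finset.Icc 1 K).filter (fun e : ℕ => T < ((b : ℝ) ^ 3 * (e : ℝ) ^ 2)) ⊆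
          Finset.Icc e₀ K := by
        intro e he'
        simp only [Finset.mem_filter, Finset.mem_Icc] at he' ⊢
        obtain ⟨⟨he1, heK⟩, heT⟩ := he'
        refine ⟨?_, heK⟩
        have hxe : x < (e : ℝ) := by
          have h1 : Real.sqrt T < Real.sqrt ((b:ℝ) ^ 3 * (e:ℝ) ^ 2) :=
            Real.sqrt_lt_sqrt (by linarith) heT
          have h2 : Real.sqrt ((b:ℝ) ^ 3 * (e:ℝ) ^ 2) = Real.sqrt ((b:ℝ) ^ 3) * e := by
            rw [Real.sqrt_mul (le_of_lt hb3pos), Real.sqrt_sq (by positivity)]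
          rw [h2] at h1
          rw [hx, div_lt_iff₀ hsb]
          linarith [mul_comm (Real.sqrt ((b:ℝ)^3)) ((e:ℝ))]
        have := (Nat.floor_lt hx0.le).mpr hxe
        omega
      have hmono : ∑ e ∈ (Finset.Icc 1 K).filter (fun e : ℕ => T < ((b : ℝ) ^ 3 * (e : ℝ) ^ 2)),
          (1:ℝ) / (e : ℝ) ^ 2 ≤ 2 / (e₀ : ℝ) := by
        refine le_trans (Finset.sum_le_sum_of_subset_of_nonneg hsub3 ?_) (sum_inv_sq e₀ (by omega) K)
        intro e _ _
        positivity
      have hsplit : ∑ e ∈ (Finset.Icc 1 K).filter (fun e : ℕ => T < ((b : ℝ) ^ 3 * (e : ℝ) ^ 2)),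
          1 / ((b : ℝ) ^ 3 * (e : ℝ) ^ 2) = (1 / (b:ℝ) ^ 3) *
          ∑ e ∈ (Finset.Icc 1 K).filter (fun e : ℕ => T < ((b : ℝ) ^ 3 * (e : ℝ) ^ 2)),
            (1:ℝ) / (e : ℝ) ^ 2 := by
        rw [Finset.mul_sum]
        refine Finset.sum_congr rfl fun e _ => ?_
        rw [div_mul_div_comm, one_mul]
      have he₀x : 2 / (e₀ : ℝ) ≤ 2 * Real.sqrt ((b:ℝ) ^ 3) / Real.sqrt T := by
        have hxe0 : x ≤ (e₀ : ℝ) := by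
          have := Nat.lt_floor_add_one x
          push_cast [he₀]
          linarith
        have h1 : 2 / (e₀ : ℝ) ≤ 2 / x := by
          apply div_le_div_of_nonneg_left (by norm_num) hx0 hxe0
        have h2 : 2 / x = 2 * Real.sqrt ((b:ℝ) ^ 3) / Real.sqrt T := by
          rw [hx, div_div_eq_mul_div]
        linarith
      have hfin : (1 / (b:ℝ) ^ 3) * (2 * Real.sqrt ((b:ℝ) ^ 3) / Real.sqrt T) =
          2 / Real.sqrt T * (1 / Real.sqrt ((b:ℝ) ^ 3)) := by
        have hsq : Real.sqrt ((b:ℝ) ^ 3) * Real.sqrt ((b:ℝ) ^ 3) = (b:ℝ) ^ 3 :=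
          Real.mul_self_sqrt (le_of_lt hb3pos)
        field_simp
        linear_combination hsq
      calc ∑ e ∈ (Finset.Icc 1 K).filter (fun e : ℕ => T < ((b : ℝ) ^ 3 * (e : ℝ) ^ 2)),
          1 / ((b : ℝ) ^ 3 * (e : ℝ) ^ 2)
          = (1 / (b:ℝ) ^ 3) * ∑ e ∈ (Finset.Icc 1 K).filter
            (fun e : ℕ => T < ((b : ℝ) ^ 3 * (e : ℝ) ^ 2)), (1:ℝ) / (e : ℝ) ^ 2 := hsplit
      _ ≤ (1 / (b:ℝ) ^ 3) * (2 / (e₀ : ℝ)) := by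
          apply mul_le_mul_of_nonneg_left hmono (by positivity)
      _ ≤ (1 / (b:ℝ) ^ 3) * (2 * Real.sqrt ((b:ℝ) ^ 3) / Real.sqrt T) := by
          apply mul_le_mul_of_nonneg_left he₀x (by positivity)
      _ = 2 / Real.sqrt T * (1 / Real.sqrt ((b:ℝ) ^ 3)) := hfin
    calc ∑ q ∈ P, 1 / ((q.1 : ℝ) ^ 3 * (q.2 : ℝ) ^ 2)
        ≤ ∑ q ∈ (Finset.Icc 1 K ×ˢ Finset.Icc 1 K).filter
            (fun q => T < ((q.1 : ℝ) ^ 3 * (q.2 : ℝ) ^ 2)),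
            1 / ((q.1 : ℝ) ^ 3 * (q.2 : ℝ) ^ 2) := by
          refine Finset.sum_le_sum_of_subset_of_nonneg hsub2 fun q _ _ => by positivity
    _ = ∑ b ∈ Finset.Icc 1 K, ∑ e ∈ Finset.Icc 1 K,
          if T < ((b : ℝ) ^ 3 * (e : ℝ) ^ 2) then 1 / ((b : ℝ) ^ 3 * (e : ℝ) ^ 2) else 0 := by
        rw [Finset.sum_filter, Finset.sum_product]
    _ = ∑ b ∈ Finset.Icc 1 K, ∑ e ∈ (Finset.Icc 1 K).filter
          (fun e : ℕ => T < ((b : ℝ) ^ 3 * (e : ℝ) ^ 2)), 1 / ((b : ℝ) ^ 3 * (e : ℝ) ^ 2) := by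
        refine Finset.sum_congr rfl fun b _ => ?_
        rw [Finset.sum_filter]
    _ ≤ ∑ b ∈ Finset.Icc 1 K, 2 / Real.sqrt T * (1 / Real.sqrt ((b : ℝ) ^ 3)) :=
        Finset.sum_le_sum inner_bound
    _ = 2 / Real.sqrt T * ∑ b ∈ Finset.Icc 1 K, 1 / Real.sqrt ((b : ℝ) ^ 3) := by
        rw [Finset.mul_sum]
    _ ≤ 2 / Real.sqrt T * 3 := by
        apply mul_le_mul_of_nonneg_left (sum_inv_pow32 K) (by positivity)
    _ = 6 / Real.sqrt T := by ring
  -- Step IV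
  have hsqN : 0 < Real.sqrt N := Real.sqrt_pos.mpr (by exact_mod_cast lt_of_lt_of_le two_pos hN)
  have hK2N : Real.sqrt (K : ℝ) ≤ 2 * Real.sqrt N := by
    have : ((K : ℕ) : ℝ) = 3 * (N : ℝ) := by rw [hK]; push_cast; ring
    rw [this, show (3 : ℝ) * N = 3 * N by ring, Real.sqrt_mul (by norm_num : (0:ℝ) ≤ 3)]
    have h3 : Real.sqrt 3 ≤ 2 := by
      rw [show (2:ℝ) = Real.sqrt 4 by rw [show (4:ℝ) = 2^2 by norm_num, Real.sqrt_sq (by norm_num)]]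
      exact Real.sqrt_le_sqrt (by norm_num)
    nlinarith [Real.sqrt_nonneg (N:ℝ)]
  have hsum2 : (P.card : ℝ) ≤ 6 * Real.sqrt N := by
    have hsub4 : P ⊆ (Finset.Icc 1 K ×ˢ Finset.Icc 1 K).filter
        (fun q => ((q.1 : ℝ) ^ 3 * (q.2 : ℝ) ^ 2) ≤ (K : ℝ)) := by
      rw [hPdef]
      intro q hq
      simp only [Finset.mem_filter] at hq ⊢
      exact ⟨hq.1, hq.2.2.1⟩
    have inner4 : ∀ b ∈ Finset.Icc 1 K,
        ((((Finset.Icc 1 K).filter (fun e : ℕ => ((b : ℝ) ^ 3 * (e : ℝ) ^ 2) ≤ (K : ℝ))).card : ℝ))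
          ≤ Real.sqrt (K : ℝ) * (1 / Real.sqrt ((b : ℝ) ^ 3)) := by
      intro b hb
      have hb1 : 1 ≤ b := (Finset.mem_Icc.mp hb).1
      have hb1R : (1:ℝ) ≤ (b:ℝ) := by exact_mod_cast hb1
      have hb3pos : (0:ℝ) < (b:ℝ) ^ 3 := by positivity
      have hsb : 0 < Real.sqrt ((b:ℝ) ^ 3) := Real.sqrt_pos.mpr hb3pos
      refine card_le_real _ _ (by positivity) ?_
      intro e he'
      simp only [Finset.mem_filter, Finset.mem_Icc] at he'
      obtain ⟨⟨he1, _⟩, heK⟩ := he'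
      refine ⟨he1, ?_⟩
      have h1 : (e : ℝ) ≤ Real.sqrt ((K : ℝ) / (b : ℝ) ^ 3) := by
        rw [Real.le_sqrt (by positivity)]
        rw [le_div_iff₀ hb3pos]
        · linarith [mul_comm ((e:ℝ)^2) ((b:ℝ)^3)]
        · positivity
      have h2 : Real.sqrt ((K : ℝ) / (b : ℝ) ^ 3) =
          Real.sqrt (K : ℝ) / Real.sqrt ((b : ℝ) ^ 3) := Real.sqrt_div (by positivity) _
      rw [mul_one_div]
      exact (h1.trans_eq h2)
    calc (P.card : ℝ)
        ≤ (((Finset.Icc 1 K ×ˢ Finset.Icc 1 K).filter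
            (fun q => ((q.1 : ℝ) ^ 3 * (q.2 : ℝ) ^ 2) ≤ (K : ℝ))).card : ℝ) := by
          exact_mod_cast Finset.card_le_card hsub4
    _ = ∑ b ∈ Finset.Icc 1 K, ∑ e ∈ Finset.Icc 1 K,
          if ((b : ℝ) ^ 3 * (e : ℝ) ^ 2) ≤ (K : ℝ) then (1:ℝ) else 0 := by
        rw [← Finset.sum_boole, Finset.sum_product]
    _ = ∑ b ∈ Finset.Icc 1 K,
          ((((Finset.Icc 1 K).filter (fun e : ℕ => ((b : ℝ) ^ 3 * (e : ℝ) ^ 2) ≤ (K : ℝ))).card : ℝ)) := by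
        refine Finset.sum_congr rfl fun b _ => ?_
        rw [Finset.sum_boole]
    _ ≤ ∑ b ∈ Finset.Icc 1 K, Real.sqrt (K : ℝ) * (1 / Real.sqrt ((b : ℝ) ^ 3)) :=
        Finset.sum_le_sum inner4
    _ = Real.sqrt (K : ℝ) * ∑ b ∈ Finset.Icc 1 K, 1 / Real.sqrt ((b : ℝ) ^ 3) := by
        rw [Finset.mul_sum]
    _ ≤ Real.sqrt (K : ℝ) * 3 := by
        apply mul_le_mul_of_nonneg_left (sum_inv_pow32 K) (Real.sqrt_nonneg _)
    _ ≤ (2 * Real.sqrt N) * 3 := by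
        apply mul_le_mul_of_nonneg_right hK2N (by norm_num)
    _ = 6 * Real.sqrt N := by ring
  -- conclusion
  calc ((Set.ncard {n : ℕ | N ≤ n ∧ n < 2 * N ∧ n % W = a % W ∧
      ∃ s : ℕ, (∀ p : ℕ, p.Prime → p ∣ s → p ^ 2 ∣ s) ∧ s ∣ n + h ∧
        T < (s : ℝ) ∧ Nat.gcd s W = 1}) : ℝ)
      ≤ ((P.biUnion A).card : ℝ) := h1
  _ ≤ ∑ q ∈ P, ((A q).card : ℝ) := h2
  _ ≤ (N : ℝ) / W * (∑ q ∈ P, 1 / ((q.1 : ℝ) ^ 3 * (q.2 : ℝ) ^ 2)) + P.card := h3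
  _ ≤ (N : ℝ) / W * (6 / Real.sqrt T) + 6 * Real.sqrt N := by
      exact add_le_add (mul_le_mul_of_nonneg_left hsum1 (by positivity)) hsum2
  _ = 6 * ((N : ℝ) / ((W : ℝ) * Real.sqrt T) + Real.sqrt N) := by
      field_simp
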